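/- arXiv:0807.3295 — 6 statements merged into one kernel-verified Lean document; each statement's English description precedes it below -/
import Mathlib

section
/- Let R be a Prüfer domain and let X, Y₁, Y₂ be invertible ideals of R contained in R with X ⊇ Y₁Y₂. Then X = X₁X₂ for some invertible ideals X₁, X₂ with X₁ ⊇ Y₁ and X₂ ⊇ Y₂. -/
open scoped nonZeroDivisors

/-- An ideal `I` of a domain `R` is invertible if it becomes a unit as a fractional ideal. -/
def IsInvertibleIdeal (R : Type*) [CommRing R] [IsDomain R] (I : Ideal R) : Prop :=
  ∃ J : FractionalIdeal R⁰ (FractionRing R), (I : FractionalIdeal R⁰ (FractionRing R)) * J = 1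

/-- `R` is a Prüfer domain if every nonzero finitely generated ideal is invertible. -/
def IsPruferDomain (R : Type*) [CommRing R] [IsDomain R] : Prop :=
  ∀ I : Ideal R, I ≠ ⊥ → I.FG → IsInvertibleIdeal R I

theorem stmt8 {R : Type*} [CommRing R] [IsDomain R] (hR : IsPruferDomain R)
    (X Y₁ Y₂ : Ideal R) (hX : IsInvertibleIdeal R X) (hY₁ : IsInvertibleIdeal R Y₁)
    (hY₂ : IsInvertibleIdeal R Y₂) (h : Y₁ * Y₂ ≤ X) :
    ∃ X₁ X₂ : Ideal R, IsInvertibleIdeal R X₁ ∧ IsInvertibleIdeal R X₂ ∧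
      X = X₁ * X₂ ∧ Y₁ ≤ X₁ ∧ Y₂ ≤ X₂ := by
  obtain ⟨JX, hJX⟩ := hX
  obtain ⟨J1, hJ1⟩ := hY₁
  have inj : Function.Injective (algebraMap R (FractionRing R)) :=
    IsFractionRing.injective R (FractionRing R)
  -- X is nonzero and f.g.
  have hXne : X ≠ ⊥ := by
    rintro rfl
    simp at hJX
  have hXfg : X.FG := Ideal.fg_of_isUnit inj X (IsUnit.of_mul_eq_one _ hJX)
  have hY₁fg : Y₁.FG := Ideal.fg_of_isUnit inj Y₁ (IsUnit.of_mul_eq_one _ hJ1)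
  -- X₁ := X ⊔ Y₁
  set X₁ : Ideal R := X ⊔ Y₁ with hX₁def
  have hX₁ne : X₁ ≠ ⊥ := fun hb => hXne (le_bot_iff.mp (hb ▸ (le_sup_left : X ≤ X₁)))
  have hX₁fg : X₁.FG := Submodule.FG.sup hXfg hY₁fg
  obtain ⟨K, hK⟩ := hR X₁ hX₁ne hX₁fg
  -- X₂ := the ideal corresponding to K * X
  have hle1 : K * (X : FractionalIdeal R⁰ (FractionRing R)) ≤ 1 := by
    calc K * (X : FractionalIdeal R⁰ (FractionRing R))
        ≤ K * (X₁ : FractionalIdeal R⁰ (FractionRing R)) := by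
          exact mul_le_mul_right
            ((FractionalIdeal.coeIdeal_le_coeIdeal _).mpr le_sup_left) K
      _ = 1 := by rw [mul_comm]; exact hK
  obtain ⟨X₂, hX₂⟩ := FractionalIdeal.le_one_iff_exists_coeIdeal.mp hle1
  refine ⟨X₁, X₂, ⟨K, hK⟩, ⟨JX * (X₁ : _), ?_⟩, ?_, le_sup_right, ?_⟩
  · rw [hX₂]
    calc K * ↑X * (JX * ↑X₁) = (↑X * JX) * (↑X₁ * K) := by ring
      _ = 1 := by rw [hJX, hK, one_mul]
  · apply FractionalIdeal.coeIdeal_injective (K := FractionRing R)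
    show (X : FractionalIdeal R⁰ (FractionRing R)) = ↑(X₁ * X₂)
    rw [FractionalIdeal.coeIdeal_mul, hX₂]
    calc (X : FractionalIdeal R⁰ (FractionRing R))
        = (↑X₁ * K) * ↑X := by rw [hK, one_mul]
      _ = ↑X₁ * (K * ↑X) := by ring
  · rw [← FractionalIdeal.coeIdeal_le_coeIdeal (FractionRing R), hX₂]
    have hmul : (X₁ : FractionalIdeal R⁰ (FractionRing R)) * ↑Y₂ ≤ ↑X := by
      rw [← FractionalIdeal.coeIdeal_mul, FractionalIdeal.coeIdeal_le_coeIdeal]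
      rw [hX₁def, Submodule.sup_mul]
      exact sup_le Ideal.mul_le_left h
    calc (Y₂ : FractionalIdeal R⁰ (FractionRing R))
        = K * (↑X₁ * ↑Y₂) := by rw [← mul_assoc, mul_comm K, hK, one_mul]
      _ ≤ K * ↑X := mul_le_mul_right hmul K
end

section
/- Let R be an integral domain in which the spectrum is treed (incomparable primes are comaximal). Suppose X and Y are proper ideals each having a unique minimal prime, and X + Y ≠ R. Then XY has a unique minimal prime. -/
private lemma key9 {R : Type*} [CommRing R]
    (X Y : Ideal R) {P Q : Ideal R}
    (hP : P ∈ X.minimalPrimes) (hPu : ∀ P', P' ∈ X.minimalPrimes → P' = P)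
    (hQ : Q ∈ Y.minimalPrimes) (hQu : ∀ Q', Q' ∈ Y.minimalPrimes → Q' = Q)
    (hPQ : P ≤ Q) : ∃! S, S ∈ (X * Y).minimalPrimes := by
  have hPp : P.IsPrime := hP.1.1
  have hQp : Q.IsPrime := hQ.1.1
  have hXYP : X * Y ≤ P := le_trans Ideal.mul_le_left hP.1.2
  refine ⟨P, ⟨⟨hPp, hXYP⟩, ?_⟩, ?_⟩
  · rintro S ⟨hSp, hSle⟩ hSP
    rcases (Ideal.IsPrime.mul_le hSp).mp hSle with h | h
    · obtain ⟨P', hP', hP'S⟩ := Ideal.exists_minimalPrimes_le h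
      rw [hPu P' hP'] at hP'S
      exact hP'S
    · obtain ⟨Q', hQ', hQ'S⟩ := Ideal.exists_minimalPrimes_le h
      rw [hQu Q' hQ'] at hQ'S
      exact le_trans hPQ hQ'S
  · rintro S ⟨⟨hSp, hSle⟩, hSmin⟩
    have hle : P ≤ S := by
      rcases (Ideal.IsPrime.mul_le hSp).mp hSle with h | h
      · obtain ⟨P', hP', hP'S⟩ := Ideal.exists_minimalPrimes_le h
        rw [hPu P' hP'] at hP'S; exact hP'S
      · obtain ⟨Q', hQ', hQ'S⟩ := Ideal.exists_minimalPrimes_le h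
        rw [hQu Q' hQ'] at hQ'S; exact le_trans hPQ hQ'S
    exact le_antisymm (hSmin ⟨hPp, hXYP⟩ hle) hle

theorem stmt9 {R : Type*} [CommRing R] [IsDomain R]
    (treed : ∀ P Q : Ideal R, P.IsPrime → Q.IsPrime → ¬P ≤ Q → ¬Q ≤ P → P ⊔ Q = ⊤)
    (X Y : Ideal R) (hX : X ≠ ⊤) (hY : Y ≠ ⊤)
    (hXu : ∃! P, P ∈ X.minimalPrimes) (hYu : ∃! P, P ∈ Y.minimalPrimes)
    (hXY : X ⊔ Y ≠ ⊤) :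
    ∃! P, P ∈ (X * Y).minimalPrimes := by
  obtain ⟨P, hP, hPu⟩ := hXu
  obtain ⟨Q, hQ, hQu⟩ := hYu
  obtain ⟨M, hMmax, hMle⟩ := Ideal.exists_le_maximal _ hXY
  have hPM : P ≤ M := by
    obtain ⟨P', hP', h⟩ := Ideal.exists_minimalPrimes_le
      (le_trans le_sup_left hMle : X ≤ M)
    rw [hPu P' hP'] at h; exact h
  have hQM : Q ≤ M := by
    obtain ⟨Q', hQ', h⟩ := Ideal.exists_minimalPrimes_le
      (le_trans le_sup_right hMle : Y ≤ M)
    rw [hQu Q' hQ'] at h; exact h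
  have hcomp : P ≤ Q ∨ Q ≤ P := by
    by_contra h
    push_neg at h
    have := treed P Q hP.1.1 hQ.1.1 h.1 h.2
    exact hMmax.ne_top (top_le_iff.mp (this ▸ sup_le hPM hQM))
  rcases hcomp with h | h
  · exact key9 X Y hP hPu hQ hQu h
  · rw [mul_comm]
    exact key9 Y X hQ hQu hP hPu h
end

section
/- Let R be an integral domain with Spec(R) treed, let X, Y be proper ideals with X + Y ≠ R, and let P be a prime ideal minimal over X + Y. Then P is minimal over X or P is minimal over Y. -/
theorem stmt10 {R : Type*} [CommRing R] [IsDomain R]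
    (treed : ∀ P Q M : Ideal R, P.IsPrime → Q.IsPrime → M.IsPrime →
      P ≤ M → Q ≤ M → P ≤ Q ∨ Q ≤ P)
    (X Y : Ideal R) (hX : X ≠ ⊤) (hY : Y ≠ ⊤) (hXY : X ⊔ Y ≠ ⊤)
    (P : Ideal R) (hP : P ∈ (X ⊔ Y).minimalPrimes) :
    P ∈ X.minimalPrimes ∨ P ∈ Y.minimalPrimes := by
  have hPprime : P.IsPrime := hP.1.1
  have hXP : X ≤ P := le_trans le_sup_left hP.1.2
  have hYP : Y ≤ P := le_trans le_sup_right hP.1.2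
  obtain ⟨Q, hQ, hQP⟩ := Ideal.exists_minimalPrimes_le hXP
  obtain ⟨Q', hQ', hQ'P⟩ := Ideal.exists_minimalPrimes_le hYP
  have hQpr : Q.IsPrime := hQ.1.1
  have hQ'pr : Q'.IsPrime := hQ'.1.1
  rcases treed Q Q' P hQpr hQ'pr hPprime hQP hQ'P with h | h
  · right
    have : X ⊔ Y ≤ Q' := sup_le (le_trans hQ.1.2 h) hQ'.1.2
    have hPQ' : P ≤ Q' := hP.2 ⟨hQ'pr, this⟩ hQ'P
    have : P = Q' := le_antisymm hPQ' hQ'P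
    rwa [this]
  · left
    have : X ⊔ Y ≤ Q := sup_le hQ.1.2 (le_trans hQ'.1.2 h)
    have hPQ : P ≤ Q := hP.2 ⟨hQpr, this⟩ hQP
    have : P = Q := le_antisymm hPQ hQP
    rwa [this]
end

section
/- Let R be an integral domain, and suppose a proper ideal X admits a factorization X = X₁⋯Xₙ where the Xᵢ are proper ideals with prime radical and are pairwise comaximal. Then this factorization is unique up to order: if X = Y₁⋯Yₘ is another such factorization, then m = n and after reordering Xᵢ = Yᵢ for all i. -/
open Ideal

theorem stmt11 {R : Type*} [CommRing R] [IsDomain R] {n m : ℕ}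
    (X : Fin n → Ideal R) (Y : Fin m → Ideal R)
    (hXp : ∀ i, X i ≠ ⊤) (hYp : ∀ j, Y j ≠ ⊤)
    (hXrad : ∀ i, (X i).radical.IsPrime) (hYrad : ∀ j, (Y j).radical.IsPrime)
    (hXcom : ∀ i j, i ≠ j → X i ⊔ X j = ⊤) (hYcom : ∀ i j, i ≠ j → Y i ⊔ Y j = ⊤)
    (hprod : (∏ i, X i) = ∏ j, Y j) (hproper : (∏ i, X i) ≠ ⊤) :
    ∃ e : Fin n ≃ Fin m, ∀ i, X i = Y (e i) := by
  classical
  -- radical comaximality transfers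
  have radTop : ∀ I J : Ideal R, I.radical ⊔ J.radical = ⊤ → I ⊔ J = ⊤ := by
    intro I J h
    rw [← Ideal.radical_eq_top, Ideal.radical_sup, h, Ideal.radical_top]
  have hXradcom : ∀ i i', i ≠ i' → (X i).radical ⊔ (X i').radical = ⊤ := by
    intro i i' h
    exact eq_top_iff.2 ((hXcom i i' h) ▸ sup_le_sup Ideal.le_radical Ideal.le_radical)
  have hYradcom : ∀ j j', j ≠ j' → (Y j).radical ⊔ (Y j').radical = ⊤ := by
    intro j j' h
    exact eq_top_iff.2 ((hYcom j j' h) ▸ sup_le_sup Ideal.le_radical Ideal.le_radical)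
  have hXle : ∀ i, (∏ i, X i) ≤ X i := fun i =>
    le_trans Ideal.prod_le_inf (Finset.inf_le (Finset.mem_univ i))
  have hYle : ∀ j, (∏ j, Y j) ≤ Y j := fun j =>
    le_trans Ideal.prod_le_inf (Finset.inf_le (Finset.mem_univ j))
  -- matching of radicals
  have hmatchX : ∀ i, ∃ j, (X i).radical = (Y j).radical := by
    intro i
    have h1 : (∏ j, Y j) ≤ (X i).radical :=
      hprod ▸ le_trans (hXle i) Ideal.le_radical
    obtain ⟨j, -, hj⟩ := (hXrad i).prod_le.1 h1
    refine ⟨j, le_antisymm ?_ ?_⟩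
    · have h2 : (∏ i, X i) ≤ (Y j).radical := le_trans (hprod ▸ hYle j) Ideal.le_radical
      obtain ⟨i', -, hi'⟩ := (hYrad j).prod_le.1 h2
      have hrad : (X i').radical ≤ (X i).radical := by
        calc (X i').radical ≤ ((Y j).radical).radical :=
              Ideal.radical_mono hi'
          _ = (Y j).radical := (hYrad j).radical
          _ ≤ ((X i).radical).radical := Ideal.radical_mono hj
          _ = (X i).radical := (hXrad i).radical
      by_cases h : i' = i
      · subst h
        exact le_trans (Ideal.radical_mono hi') (le_of_eq (hYrad j).radical)
      · exfalso
        have := hXradcom i' i h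
        have : (X i).radical = ⊤ := eq_top_iff.2 (this ▸ sup_le hrad le_rfl)
        exact (hXrad i).ne_top this
    · calc (Y j).radical ≤ ((X i).radical).radical := Ideal.radical_mono hj
        _ = (X i).radical := (hXrad i).radical
  have hmatchY : ∀ j, ∃ i, (Y j).radical = (X i).radical := by
    intro j
    have h1 : (∏ i, X i) ≤ (Y j).radical := le_trans (hprod ▸ hYle j) Ideal.le_radical
    obtain ⟨i, -, hi⟩ := (hYrad j).prod_le.1 h1
    refine ⟨i, le_antisymm ?_ ?_⟩
    · have h2 : (∏ j, Y j) ≤ (X i).radical :=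
        hprod ▸ le_trans (hXle i) Ideal.le_radical
      obtain ⟨j', -, hj'⟩ := (hXrad i).prod_le.1 h2
      have hrad : (Y j').radical ≤ (Y j).radical := by
        calc (Y j').radical ≤ ((X i).radical).radical := Ideal.radical_mono hj'
          _ = (X i).radical := (hXrad i).radical
          _ ≤ ((Y j).radical).radical := Ideal.radical_mono hi
          _ = (Y j).radical := (hYrad j).radical
      by_cases h : j' = j
      · subst h
        exact le_trans (Ideal.radical_mono hj') (le_of_eq (hXrad i).radical)
      · exfalso
        have := hYradcom j' j h
        have : (Y j).radical = ⊤ := eq_top_iff.2 (this ▸ sup_le hrad le_rfl)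
        exact (hYrad j).ne_top this
    · calc (X i).radical ≤ ((Y j).radical).radical := Ideal.radical_mono hi
        _ = (Y j).radical := (hYrad j).radical
  choose f hf using hmatchX
  choose g hg using hmatchY
  have finj : Function.Injective f := by
    intro i i' h
    by_contra hne
    have h1 : (X i).radical = (X i').radical := by rw [hf i, h, ← hf i']
    have := hXradcom i i' hne
    rw [h1, sup_idem] at this
    exact (hXrad i').ne_top this
  have ginj : Function.Injective g := by
    intro j j' h
    by_contra hne
    have h1 : (Y j).radical = (Y j').radical := by rw [hg j, h, ← hg j']
    have := hYradcom j j' hne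
    rw [h1, sup_idem] at this
    exact (hYrad j').ne_top this
  have hcard : n = m := le_antisymm
    (by simpa using Fintype.card_le_of_injective f finj)
    (by simpa using Fintype.card_le_of_injective g ginj)
  have fbij : Function.Bijective f :=
    (Fintype.bijective_iff_injective_and_card f).2 ⟨finj, by simp [hcard]⟩
  -- key containment lemma
  have key : ∀ I A B : Ideal R, A * B ≤ I → I ⊔ B = ⊤ → A ≤ I := by
    intro I A B hAB hIB a ha
    have h1 : (1 : R) ∈ I ⊔ B := hIB ▸ Submodule.mem_top
    obtain ⟨y, hy, z, hz, hyz⟩ := Submodule.mem_sup.1 h1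
    have : a = a * y + a * z := by rw [← mul_add, hyz, mul_one]
    rw [this]
    exact add_mem (I.mul_mem_left a hy) (hAB (Ideal.mul_mem_mul ha hz))
  -- f i is the unique match
  have huniq : ∀ i j, j ≠ f i → X i ⊔ Y j = ⊤ := by
    intro i j hj
    apply radTop
    by_cases h : g j = i
    · exfalso
      have h1 : (Y j).radical = (Y (f i)).radical := by rw [hg j, h, hf i]
      have := hYradcom j (f i) hj
      rw [h1, sup_idem] at this
      exact (hYrad (f i)).ne_top this
    · have := hXradcom i (g j) (fun he => h he.symm)
      rw [← hg j] at this
      exact this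
  refine ⟨Equiv.ofBijective f fbij, fun i => ?_⟩
  show X i = Y (f i)
  apply le_antisymm
  · -- X i ≤ Y (f i) : use ∏ X = X i * (∏ erase i) ≤ Y (f i)
    have hsplit : (∏ i', X i') = X i * ∏ i' ∈ Finset.univ.erase i, X i' :=
      (Finset.mul_prod_erase Finset.univ X (Finset.mem_univ i)).symm
    have hcom : Y (f i) ⊔ (∏ i' ∈ Finset.univ.erase i, X i') = ⊤ := by
      apply Ideal.sup_prod_eq_top
      intro i' hi'
      have hne : i' ≠ i := Finset.ne_of_mem_erase hi'
      apply radTop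
      rw [← hf i]
      exact hXradcom i i' (fun he => hne he.symm)
    apply key (Y (f i)) (X i) (∏ i' ∈ Finset.univ.erase i, X i') _ hcom
    rw [← hsplit, hprod]
    exact hYle (f i)
  · -- Y (f i) ≤ X i
    have hsplit : (∏ j, Y j) = Y (f i) * ∏ j ∈ Finset.univ.erase (f i), Y j :=
      (Finset.mul_prod_erase Finset.univ Y (Finset.mem_univ (f i))).symm
    have hcom : X i ⊔ (∏ j ∈ Finset.univ.erase (f i), Y j) = ⊤ :=
      Ideal.sup_prod_eq_top fun j hj => huniq i j (Finset.ne_of_mem_erase hj)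
    apply key (X i) (Y (f i)) (∏ j ∈ Finset.univ.erase (f i), Y j) _ hcom
    rw [← hsplit, ← hprod]
    exact hXle i
end

section
/- Let R be an integral domain such that every nonzero principal proper ideal xR can be written as a product X₁⋯Xₙ of pairwise comaximal invertible ideals each having a unique minimal prime. Then Spec(R) is treed, i.e., any two incomparable primes are comaximal. -/
open scoped nonZeroDivisors

theorem stmt12 {R : Type*} [CommRing R] [IsDomain R]
    (h : ∀ x : R, x ≠ 0 → ¬IsUnit x → ∃ (n : ℕ) (X : Fin n → Ideal R),
      (∀ i, IsInvertibleIdeal R (X i)) ∧ (∀ i, (X i).radical.IsPrime) ∧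
      (∀ i j, i ≠ j → X i ⊔ X j = ⊤) ∧ Ideal.span {x} = ∏ i, X i) :
    ∀ P Q : Ideal R, P.IsPrime → Q.IsPrime → ¬P ≤ Q → ¬Q ≤ P → P ⊔ Q = ⊤ := by
  intro P Q hP hQ hPQ hQP
  by_contra htop
  obtain ⟨a, haP, haQ⟩ := Set.not_subset.mp hPQ
  obtain ⟨b, hbQ, hbP⟩ := Set.not_subset.mp hQP
  have ha0 : a ≠ 0 := fun h0 => haQ (h0 ▸ Q.zero_mem)
  have hb0 : b ≠ 0 := fun h0 => hbP (h0 ▸ P.zero_mem)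
  have hx0 : a * b ≠ 0 := mul_ne_zero ha0 hb0
  have hxu : ¬IsUnit (a * b) := fun hu => hP.ne_top (P.eq_top_of_isUnit_mem
    (P.mul_mem_right b haP) hu)
  obtain ⟨n, X, -, hrad, hcomax, hprod⟩ := h (a * b) hx0 hxu
  have hle : Ideal.span {a * b} ≤ P := (Ideal.span_singleton_le_iff_mem P).mpr
    (P.mul_mem_right b haP)
  have hleQ : Ideal.span {a * b} ≤ Q := (Ideal.span_singleton_le_iff_mem Q).mpr
    (Q.mul_mem_left a hbQ)
  rw [hprod] at hle hleQ
  obtain ⟨k, -, hkP⟩ := (hP.prod_le).mp hle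
  obtain ⟨l, -, hlQ⟩ := (hQ.prod_le).mp hleQ
  have hkl : k = l := by
    by_contra hne
    exact htop (top_le_iff.mp ((hcomax k l hne) ▸ sup_le_sup hkP hlQ))
  subst hkl
  have hXk : ∏ i, X i ≤ X k := Ideal.prod_le_inf.trans (Finset.inf_le (Finset.mem_univ k))
  have hab : a * b ∈ (X k).radical := Ideal.le_radical (hXk (hprod ▸ Ideal.mem_span_singleton_self _))
  have hradP : (X k).radical ≤ P := hP.radical ▸ Ideal.radical_mono hkP
  have hradQ : (X k).radical ≤ Q := hQ.radical ▸ Ideal.radical_mono hlQ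
  rcases (hrad k).mem_or_mem hab with hmem | hmem
  · exact haQ (hradQ hmem)
  · exact hbP (hradP hmem)
end

section
/- Let R be an integral domain with Spec(R) treed, let I = a₁R + ⋯ + aₙR be a nonzero finitely generated proper ideal, and let P be a prime containing I. Then P is a minimal prime of I if and only if P is a minimal prime of aᵢR for some i. -/
lemma chain_max {α : Type*} [PartialOrder α] : ∀ (n : ℕ) (f : Fin (n + 1) → α),
    (∀ i j, f i ≤ f j ∨ f j ≤ f i) → ∃ j, ∀ i, f i ≤ f j := by
  intro n
  induction n with
  | zero => exact fun f _ => ⟨0, fun i => by rw [Fin.eq_zero i]⟩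
  | succ m ih =>
    intro f hf
    obtain ⟨j, hj⟩ := ih (f ∘ Fin.succ) (fun i j => hf _ _)
    rcases hf 0 j.succ with h | h
    · refine ⟨j.succ, fun i => ?_⟩
      rcases i.eq_zero_or_eq_succ with rfl | ⟨k, rfl⟩
      · exact h
      · exact hj k
    · refine ⟨0, fun i => ?_⟩
      rcases i.eq_zero_or_eq_succ with rfl | ⟨k, rfl⟩
      · exact le_refl _
      · exact (hj k).trans h

theorem stmt13 {R : Type*} [CommRing R] [IsDomain R]
    (treed : ∀ P Q M : Ideal R, P.IsPrime → Q.IsPrime → M.IsPrime →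
      P ≤ M → Q ≤ M → P ≤ Q ∨ Q ≤ P)
    {n : ℕ} (a : Fin n → R) (I : Ideal R) (hI : I = Ideal.span (Set.range a))
    (hI0 : I ≠ ⊥) (hIT : I ≠ ⊤)
    (P : Ideal R) (hP : P.IsPrime) (hIP : I ≤ P) :
    P ∈ I.minimalPrimes ↔ ∃ i, P ∈ (Ideal.span {a i}).minimalPrimes := by
  have haiI : ∀ i, Ideal.span {a i} ≤ I := by
    intro i
    rw [hI, Ideal.span_le]
    exact Set.singleton_subset_iff.mpr (Ideal.subset_span ⟨i, rfl⟩)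
  constructor
  · intro hmin
    -- n ≠ 0
    rcases n with _ | m
    · exact absurd (by rw [hI]; simp [Set.range_eq_empty]) hI0
    -- choose minimal primes Q i of span {a i} inside P
    have hexists : ∀ i : Fin (m + 1), ∃ Q ∈ (Ideal.span {a i}).minimalPrimes, Q ≤ P :=
      fun i => Ideal.exists_minimalPrimes_le ((haiI i).trans hIP)
    choose Q hQmin hQP using hexists
    have hQprime : ∀ i, (Q i).IsPrime := fun i => (hQmin i).1.1
    obtain ⟨j, hj⟩ := chain_max m Q
      (fun i k => treed _ _ _ (hQprime i) (hQprime k) hP (hQP i) (hQP k))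
    -- Q j contains I
    have hIQ : I ≤ Q j := by
      rw [hI, Ideal.span_le]
      rintro x ⟨i, rfl⟩
      exact hj i ((hQmin i).1.2 (Ideal.mem_span_singleton_self _))
    have hPQ : P ≤ Q j := hmin.2 ⟨hQprime j, hIQ⟩ (hQP j)
    have : P = Q j := le_antisymm hPQ (hQP j)
    exact ⟨j, this ▸ hQmin j⟩
  · rintro ⟨i, hmin⟩
    refine ⟨⟨hP, hIP⟩, fun Q hQ hQP => ?_⟩
    exact hmin.2 ⟨hQ.1, (haiI i).trans hQ.2⟩ hQP
end
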